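/- Let (X, 𝓑, m) be a σ-finite measure space, μ a probability measure on (X, 𝓑), C a subcone of L¹₊(m) such that the additive semigroup ⟨C⟩ generated by C is dense in L¹₊(m), (f_t)_{t ≥ 0} a family of measurable maps f_t : X → X, and g : X → ℝ a bounded measurable function. Suppose that for every m-absolutely continuous probability measure ν with dν/dm ∈ C, one has ∫ g d(f_t ν) → ∫ g dμ as t → ∞, where f_t ν denotes the pushforward of ν by f_t. Then ∫ g d(f_t ν) → ∫ g dμ as t → ∞ for every m-absolutely continuous probability measure ν. -/

import Mathlib

open MeasureTheory Filter Topology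

/-- Let `(X, 𝓑, m)` be a σ-finite measure space, `μ` a probability measure,
`C` a subcone of `L¹₊(m)` whose generated additive semigroup is dense in `L¹₊(m)`,
`(f_t)_{t ≥ 0}` a family of measurable maps, and `g` a bounded measurable function.
If `∫ g d(f_t ν) → ∫ g dμ` for every `m`-absolutely continuous probability measure with
density in `C`, then the same holds for every `m`-absolutely continuous probability
measure. -/
theorem stmt_0 {X : Type*} [MeasurableSpace X]
    (m : Measure X) [SigmaFinite m]
    (μ : Measure X) [IsProbabilityMeasure μ]
    (C : Set (X → ℝ))
    (hC_sub : ∀ h ∈ C, Integrable h m ∧ 0 ≤ h)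
    (hC_cone : ∀ h ∈ C, ∀ c : ℝ, 0 < c → c • h ∈ C)
    (hC_dense : ∀ h : X → ℝ, Integrable h m → 0 ≤ h → ∀ ε : ℝ, 0 < ε →
      ∃ s ∈ AddSubsemigroup.closure C, ∫ x, |h x - s x| ∂m < ε)
    (f : ℝ → X → X) (hf : ∀ t : ℝ, 0 ≤ t → Measurable (f t))
    (g : X → ℝ) (hg : Measurable g) (M : ℝ) (hgb : ∀ x, |g x| ≤ M)
    (hconv : ∀ h ∈ C, ∀ ν : Measure X, IsProbabilityMeasure ν →
      ν = m.withDensity (fun x => ENNReal.ofReal (h x)) →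
      Tendsto (fun t : ℝ => ∫ x, g x ∂(ν.map (f t))) atTop (𝓝 (∫ x, g x ∂μ)))
    (ν : Measure X) (hνp : IsProbabilityMeasure ν) (hν : ν ≪ m) :
    Tendsto (fun t : ℝ => ∫ x, g x ∂(ν.map (f t))) atTop (𝓝 (∫ x, g x ∂μ)) := by
  classical
  set L := ∫ x, g x ∂μ with hL
  -- the density of ν with respect to m
  set h : X → ℝ := fun x => (ν.rnDeriv m x).toReal with hhdef
  have hint : Integrable h m := Measure.integrable_toReal_rnDeriv
  have hpos : 0 ≤ h := fun x => ENNReal.toReal_nonneg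
  have hh1 : ∫ x, h x ∂m = 1 := by
    rw [hhdef, Measure.integral_toReal_rnDeriv hν]
    simp
  -- integrability of products
  have hGint : ∀ (s : X → ℝ), Integrable s m → ∀ t : ℝ, 0 ≤ t →
      Integrable (fun x => g (f t x) * s x) m := fun s hs t ht =>
    hs.bdd_mul ((hg.comp (hf t ht)).aestronglyMeasurable)
      (c := M) (Filter.Eventually.of_forall fun x => by simpa [Real.norm_eq_abs] using hgb (f t x))
  have habs : ∀ (μ' : Measure X) (F : X → ℝ), |∫ x, F x ∂μ'| ≤ ∫ x, |F x| ∂μ' :=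
    fun μ' F => by simpa [Real.norm_eq_abs] using norm_integral_le_integral_norm (μ := μ') F
  -- change of variables
  have key : ∀ t : ℝ, 0 ≤ t →
      ∫ x, g x ∂(ν.map (f t)) = ∫ x, g (f t x) * h x ∂m := by
    intro t ht
    rw [integral_map (hf t ht).aemeasurable hg.aestronglyMeasurable,
      ← integral_rnDeriv_smul hν (f := fun x => g (f t x))]
    simp only [smul_eq_mul, hhdef, mul_comm]
  -- the main induction over the generated semigroup
  have main : ∀ s ∈ AddSubsemigroup.closure C, Integrable s m ∧ 0 ≤ s ∧
      Tendsto (fun t : ℝ => ∫ x, g (f t x) * s x ∂m) atTop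
        (𝓝 ((∫ x, s x ∂m) * L)) := by
    intro s hs
    induction hs using AddSubsemigroup.closure_induction with
    | mem h' hmem =>
      obtain ⟨hint', hpos'⟩ := hC_sub h' hmem
      refine ⟨hint', hpos', ?_⟩
      set c := ∫ x, h' x ∂m with hc
      have hcnn : (0:ℝ) ≤ c := integral_nonneg hpos'
      rcases eq_or_lt_of_le hcnn with hc0 | hc0
      · -- degenerate case: the integral of h' is zero, so h' = 0 a.e.
        have hz : h' =ᵐ[m] 0 := by
          rw [← integral_eq_zero_iff_of_nonneg hpos' hint']
          have hc0' : c = 0 := hc0.symm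
          rwa [hc] at hc0'
        have hzero : ∀ t : ℝ, ∫ x, g (f t x) * h' x ∂m = 0 := by
          intro t
          have : (fun x => g (f t x) * h' x) =ᵐ[m] 0 :=
            hz.mono fun x hx => by simp [hx]
          simp [integral_congr_ae this]
        have hcl : c * L = 0 := by rw [← hc0, zero_mul]
        rw [hcl]
        simp only [hzero]
        exact tendsto_const_nhds
      · -- normalize h'
        set h2 := c⁻¹ • h' with hh2
        have hmem2 : h2 ∈ C := hC_cone h' hmem _ (inv_pos.mpr hc0)
        obtain ⟨hint2, hpos2⟩ := hC_sub _ hmem2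
        have hint2' : ∫ x, h2 x ∂m = 1 := by
          simp only [hh2, Pi.smul_apply, smul_eq_mul, integral_const_mul, ← hc]
          exact inv_mul_cancel₀ hc0.ne'
        set ν' := m.withDensity (fun x => ENNReal.ofReal (h2 x)) with hν'
        have hprob : IsProbabilityMeasure ν' := by
          constructor
          rw [hν', withDensity_apply _ MeasurableSet.univ, setLIntegral_univ,
            ← ofReal_integral_eq_lintegral_ofReal hint2
              (Filter.Eventually.of_forall hpos2), hint2']
          simp
        have htend := hconv h2 hmem2 ν' hprob rfl
        have conv2 : ∀ t : ℝ, 0 ≤ t →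
            ∫ x, g x ∂(ν'.map (f t)) = c⁻¹ * ∫ x, g (f t x) * h' x ∂m := by
          intro t ht
          rw [integral_map (hf t ht).aemeasurable hg.aestronglyMeasurable, hν']
          have hmeas : AEMeasurable (fun x => (h2 x).toNNReal) m :=
            measurable_real_toNNReal.comp_aemeasurable hint2.aemeasurable
          have hrw : (fun x => ENNReal.ofReal (h2 x))
              = fun x => ((h2 x).toNNReal : ENNReal) := rfl
          rw [hrw, integral_withDensity_eq_integral_smul₀ hmeas, ← integral_const_mul]
          refine integral_congr_ae (Filter.Eventually.of_forall fun x => ?_)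
          simp only [NNReal.smul_def, Real.coe_toNNReal _ (hpos2 x)]
          simp only [hh2, Pi.smul_apply, smul_eq_mul]
          ring
        have tend : Tendsto (fun t : ℝ => c⁻¹ * ∫ x, g (f t x) * h' x ∂m)
            atTop (𝓝 L) :=
          htend.congr' ((eventually_ge_atTop 0).mono fun t ht => conv2 t ht)
        have tend2 := tend.const_mul c
        have : (fun t : ℝ => c * (c⁻¹ * ∫ x, g (f t x) * h' x ∂m))
            = fun t : ℝ => ∫ x, g (f t x) * h' x ∂m := by
          funext t; field_simp
        rw [this] at tend2
        exact tend2
    | add s₁ s₂ hs₁ hs₂ ih1 ih2 =>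
      obtain ⟨i1, p1, t1⟩ := ih1
      obtain ⟨i2, p2, t2⟩ := ih2
      refine ⟨i1.add i2, fun x => add_nonneg (p1 x) (p2 x), ?_⟩
      have heq : ∀ t : ℝ, 0 ≤ t → ∫ x, g (f t x) * (s₁ + s₂) x ∂m
          = (∫ x, g (f t x) * s₁ x ∂m) + ∫ x, g (f t x) * s₂ x ∂m := by
        intro t ht
        rw [← integral_add (hGint s₁ i1 t ht) (hGint s₂ i2 t ht)]
        refine integral_congr_ae (Filter.Eventually.of_forall fun x => ?_)
        simp [mul_add]
      have hsum : ∫ x, (s₁ + s₂) x ∂m = (∫ x, s₁ x ∂m) + ∫ x, s₂ x ∂m := by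
        simp only [Pi.add_apply]
        exact integral_add i1 i2
      rw [hsum, add_mul]
      exact (t1.add t2).congr' ((eventually_ge_atTop 0).mono fun t ht => (heq t ht).symm)
  -- bound on L
  have hgμint : Integrable g μ :=
    (integrable_const M).mono' hg.aestronglyMeasurable
      (Filter.Eventually.of_forall fun x => by simpa [Real.norm_eq_abs] using hgb x)
  set M' := max M 1 with hM'
  have hM'0 : (0:ℝ) < M' := lt_of_lt_of_le one_pos (le_max_right _ _)
  have hgb' : ∀ x, |g x| ≤ M' := fun x => (hgb x).trans (le_max_left _ _)
  have hLb : |L| ≤ M' := by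
    calc |L| ≤ ∫ x, |g x| ∂μ := habs _ _
    _ ≤ ∫ _, M' ∂μ := integral_mono hgμint.abs (integrable_const _) fun x => hgb' x
    _ = M' := by simp
  -- final ε-argument
  rw [Metric.tendsto_nhds]
  intro ε hε
  set δ := ε / (2 * M' + 2) with hδdef
  have hδ : 0 < δ := div_pos hε (by linarith)
  obtain ⟨s, hsmem, hsd⟩ := hC_dense h hint hpos δ hδ
  obtain ⟨si, sp, st⟩ := main s hsmem
  have hs1 : |(∫ x, s x ∂m) - 1| ≤ δ := by
    rw [← hh1]
    have e : (∫ x, s x ∂m) - ∫ x, h x ∂m = ∫ x, (s x - h x) ∂m :=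
      (integral_sub si hint).symm
    rw [e]
    calc |∫ x, (s x - h x) ∂m| ≤ ∫ x, |s x - h x| ∂m := habs _ _
    _ = ∫ x, |h x - s x| ∂m := by
        exact integral_congr_ae (Filter.Eventually.of_forall fun x => abs_sub_comm _ _)
    _ ≤ δ := hsd.le
  have hst := Metric.tendsto_nhds.mp st δ hδ
  filter_upwards [hst, eventually_ge_atTop (0:ℝ)] with t htδ ht
  rw [Real.dist_eq] at htδ ⊢
  rw [key t ht]
  -- term 1 : |J t h - J t s| ≤ M' * δ
  have term1 : |(∫ x, g (f t x) * h x ∂m) - ∫ x, g (f t x) * s x ∂m| ≤ M' * δ := by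
    have e : (∫ x, g (f t x) * h x ∂m) - ∫ x, g (f t x) * s x ∂m
        = ∫ x, g (f t x) * (h x - s x) ∂m := by
      rw [← integral_sub (hGint h hint t ht) (hGint s si t ht)]
      refine integral_congr_ae (Filter.Eventually.of_forall fun x => ?_)
      ring
    rw [e]
    calc |∫ x, g (f t x) * (h x - s x) ∂m|
        ≤ ∫ x, |g (f t x) * (h x - s x)| ∂m := habs _ _
    _ ≤ ∫ x, M' * |h x - s x| ∂m := by
        refine integral_mono (hGint _ (hint.sub si) t ht).abs
          ((hint.sub si).abs.const_mul M') fun x => ?_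
        rw [abs_mul]
        exact mul_le_mul_of_nonneg_right (hgb' _) (abs_nonneg _)
    _ = M' * ∫ x, |h x - s x| ∂m := integral_const_mul _ _
    _ ≤ M' * δ := by nlinarith [hsd.le]
  -- term 3 : |(∫ s) * L - L| ≤ δ * M'
  have term3 : |(∫ x, s x ∂m) * L - L| ≤ δ * M' := by
    have e : (∫ x, s x ∂m) * L - L = ((∫ x, s x ∂m) - 1) * L := by ring
    rw [e, abs_mul]
    exact mul_le_mul hs1 hLb (abs_nonneg _) hδ.le
  calc |(∫ x, g (f t x) * h x ∂m) - L|
      ≤ |(∫ x, g (f t x) * h x ∂m) - ∫ x, g (f t x) * s x ∂m|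
        + |(∫ x, g (f t x) * s x ∂m) - (∫ x, s x ∂m) * L|
        + |(∫ x, s x ∂m) * L - L| := by
        have := abs_sub_le (∫ x, g (f t x) * h x ∂m) (∫ x, g (f t x) * s x ∂m) L
        have h2 := abs_sub_le (∫ x, g (f t x) * s x ∂m) ((∫ x, s x ∂m) * L) L
        linarith
  _ < M' * δ + δ + δ * M' := by
      have := htδ
      linarith [term1, term3]
  _ ≤ ε := by
      have : δ * (2 * M' + 2) = ε := by
        rw [hδdef]; field_simp
      nlinarith [hδ.le]
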